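/- Let X and Z be Banach spaces and Y a closed subspace of X. Suppose there exists an extension morphism for C¹ Lipschitz functions, i.e., a bounded linear map T : C¹_L(Y) → C¹_L(X) with T(f)|_Y = f for all f ∈ C¹_L(Y). Then there exists a bounded linear extension morphism S : Y* → X* with S(φ)|_Y = φ for all φ ∈ Y* and ‖S‖ ≤ ‖T‖. -/

import Mathlib

/-- Membership in the space `C¹_L(E)` of `C¹` smooth Lipschitz real-valued functions. -/
def MemC1L {E : Type*} [NormedAddCommGroup E] [NormedSpace ℝ E] (f : E → ℝ) : Prop :=
  ContDiff ℝ 1 f ∧ ∃ K : NNReal, LipschitzWith K f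

/-- The (least) Lipschitz constant of a real-valued function. -/
noncomputable def lipC {E : Type*} [NormedAddCommGroup E] (f : E → ℝ) : ℝ :=
  sInf {L : ℝ | 0 ≤ L ∧ ∀ x y : E, |f x - f y| ≤ L * ‖x - y‖}

lemma memC1L_clm {E : Type*} [NormedAddCommGroup E] [NormedSpace ℝ E] (φ : E →L[ℝ] ℝ) :
    MemC1L (φ : E → ℝ) :=
  ⟨φ.contDiff, ⟨‖φ‖₊, φ.lipschitz⟩⟩

lemma norm_fderiv_le_lipC {E : Type*} [NormedAddCommGroup E] [NormedSpace ℝ E]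
    {f : E → ℝ} (hf : MemC1L f) : ‖fderiv ℝ f 0‖ ≤ lipC f := by
  obtain ⟨hsm, K, hK⟩ := hf
  have hmem : (K : ℝ) ∈ {L : ℝ | 0 ≤ L ∧ ∀ x y : E, |f x - f y| ≤ L * ‖x - y‖} :=
    ⟨K.coe_nonneg, fun x y => by
      simpa [Real.dist_eq, dist_eq_norm] using hK.dist_le_mul x y⟩
  apply le_csInf ⟨_, hmem⟩
  rintro L ⟨hL0, hL⟩
  have hlip : LipschitzWith ⟨L, hL0⟩ f := by
    apply LipschitzWith.of_dist_le_mul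
    intro x y
    rw [Real.dist_eq, dist_eq_norm]; exact hL x y
  exact norm_fderiv_le_of_lipschitz ℝ (x₀ := 0) hlip

lemma lipC_clm_le {E : Type*} [NormedAddCommGroup E] [NormedSpace ℝ E] (φ : E →L[ℝ] ℝ) :
    lipC (φ : E → ℝ) ≤ ‖φ‖ := by
  apply csInf_le ⟨0, fun L hL => hL.1⟩
  refine ⟨norm_nonneg φ, fun x y => ?_⟩
  calc |φ x - φ y| = ‖φ (x - y)‖ := by rw [map_sub]; rfl
    _ ≤ ‖φ‖ * ‖x - y‖ := φ.le_opNorm _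

/-- Lemma 4.9: if there is a bounded linear extension morphism `T : C¹_L(Y) → C¹_L(X)`
(of norm at most `M`, with respect to the norm `‖f‖ = |f 0| + Lip(f)`), then there is a
bounded linear extension morphism `S : Y* → X*` with `‖S φ‖ ≤ M‖φ‖` for all `φ ∈ Y*`. -/
theorem dual_extension_morphism_of_C1L_extension_morphism
    {X : Type*} [NormedAddCommGroup X] [NormedSpace ℝ X] [CompleteSpace X]
    (Y : Subspace ℝ X) (hY : IsClosed (Y : Set X))
    (M : ℝ) (hM : 0 ≤ M)
    (T : (↥Y → ℝ) →ₗ[ℝ] (X → ℝ))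
    (hTC1 : ∀ f : ↥Y → ℝ, MemC1L f → MemC1L (T f))
    (hText : ∀ f : ↥Y → ℝ, MemC1L f → ∀ y : ↥Y, T f (y : X) = f y)
    (hTbd : ∀ f : ↥Y → ℝ, MemC1L f → |T f 0| + lipC (T f) ≤ M * (|f 0| + lipC f)) :
    ∃ S : (↥Y →L[ℝ] ℝ) →ₗ[ℝ] (X →L[ℝ] ℝ),
      ∀ φ : ↥Y →L[ℝ] ℝ, (∀ y : ↥Y, S φ (y : X) = φ y) ∧ ‖S φ‖ ≤ M * ‖φ‖ := by
  have hdiff : ∀ φ : ↥Y →L[ℝ] ℝ, Differentiable ℝ (T (φ : ↥Y → ℝ)) := fun φ =>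
    (hTC1 _ (memC1L_clm φ)).1.differentiable one_ne_zero
  refine ⟨{ toFun := fun φ => fderiv ℝ (T (φ : ↥Y → ℝ)) 0
            map_add' := fun φ ψ => by
              have : (((φ + ψ : ↥Y →L[ℝ] ℝ)) : ↥Y → ℝ) = (φ : ↥Y → ℝ) + (ψ : ↥Y → ℝ) := rfl
              show fderiv ℝ (T ⇑(φ + ψ)) 0 = fderiv ℝ (T ⇑φ) 0 + fderiv ℝ (T ⇑ψ) 0
              rw [this, map_add]
              exact fderiv_add ((hdiff φ) 0) ((hdiff ψ) 0)
            map_smul' := fun c φ => by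
              have : (((c • φ : ↥Y →L[ℝ] ℝ)) : ↥Y → ℝ) = c • (φ : ↥Y → ℝ) := rfl
              show fderiv ℝ (T ⇑(c • φ)) 0 = c • fderiv ℝ (T ⇑φ) 0
              rw [this, map_smul]
              simpa using fderiv_const_smul ((hdiff φ) 0) c }, ?_⟩
  intro φ
  constructor
  · intro y
    have hcomp : (T (φ : ↥Y → ℝ)) ∘ (Y.subtypeL : ↥Y →L[ℝ] X) = (φ : ↥Y → ℝ) := by
      funext z
      exact hText _ (memC1L_clm φ) z
    have h1 : fderiv ℝ ((T (φ : ↥Y → ℝ)) ∘ (Y.subtypeL : ↥Y →L[ℝ] X)) 0 =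
        (fderiv ℝ (T (φ : ↥Y → ℝ)) 0).comp Y.subtypeL := by
      have := ((hdiff φ) (Y.subtypeL 0)).hasFDerivAt.comp (0 : ↥Y) Y.subtypeL.hasFDerivAt
      simpa using this.fderiv
    have h2 : fderiv ℝ ((φ : ↥Y → ℝ)) (0 : ↥Y) = φ := φ.fderiv
    have := congrArg (fun L : ↥Y →L[ℝ] ℝ => L y) (h1.symm.trans (by rw [hcomp, h2]))
    simpa using this
  · apply ContinuousLinearMap.opNorm_le_bound _ (by positivity)
    intro x
    have hmem := memC1L_clm φ
    have hbd := hTbd _ hmem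
    have h0 : |(φ : ↥Y → ℝ) 0| = 0 := by simp
    have key : ‖fderiv ℝ (T (φ : ↥Y → ℝ)) 0‖ ≤ M * ‖φ‖ := by
      calc ‖fderiv ℝ (T (φ : ↥Y → ℝ)) 0‖ ≤ lipC (T (φ : ↥Y → ℝ)) :=
            norm_fderiv_le_lipC (hTC1 _ hmem)
        _ ≤ |T (φ : ↥Y → ℝ) 0| + lipC (T (φ : ↥Y → ℝ)) := le_add_of_nonneg_left (abs_nonneg _)
        _ ≤ M * (|(φ : ↥Y → ℝ) 0| + lipC (φ : ↥Y → ℝ)) := hbd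
        _ ≤ M * ‖φ‖ := by
            rw [h0, zero_add]; exact mul_le_mul_of_nonneg_left (lipC_clm_le φ) hM
    calc ‖fderiv ℝ (T (φ : ↥Y → ℝ)) 0 x‖ ≤ ‖fderiv ℝ (T (φ : ↥Y → ℝ)) 0‖ * ‖x‖ :=
          (fderiv ℝ (T (φ : ↥Y → ℝ)) 0).le_opNorm x
      _ ≤ M * ‖φ‖ * ‖x‖ := mul_le_mul_of_nonneg_right key (norm_nonneg x)
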